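/- On the open subset Ω = {(θ₁, θ₂, b, q) ∈ ℝ⁴ : 0 < q < 1} of ℝ⁴, define the vector fields V₁(θ₁,θ₂,b,q) = (1/q, 1/(1−q), 1, 0) and V₂(θ₁,θ₂,b,q) = (0, 0, 0, 1). Then [V₁,V₂](θ₁,θ₂,b,q) = (1/q², −1/(1−q)², 0, 0), and at every point of Ω the three vectors V₁, V₂, [V₁,V₂] are linearly independent in ℝ⁴. -/

import Mathlib

/-- The Lie bracket of two vector fields on a normed space,
`[V,W](x) = DW(x)(V(x)) − DV(x)(W(x))`. -/
noncomputable def lieBracket {E : Type*} [NormedAddCommGroup E] [NormedSpace ℝ E]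
    (V W : E → E) : E → E :=
  fun x => fderiv ℝ W x (V x) - fderiv ℝ V x (W x)

/-- Continuously-variable-transmission example: on `Ω = {(θ₁,θ₂,b,q) : 0 < q < 1}`,
for `V₁ = (1/q, 1/(1−q), 1, 0)` and `V₂ = (0,0,0,1)`, the bracket is
`[V₁,V₂] = (1/q², −1/(1−q)², 0, 0)`, and `V₁, V₂, [V₁,V₂]` are linearly
independent at every point of `Ω`. -/
theorem cvt_reconstruction_matrix_full_rank
    (V₁ V₂ : EuclideanSpace ℝ (Fin 4) → EuclideanSpace ℝ (Fin 4))
    (hV₁ : ∀ p, V₁ p = (WithLp.equiv 2 (Fin 4 → ℝ)).symm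
        ![1 / p 3, 1 / (1 - p 3), 1, 0])
    (hV₂ : ∀ p, V₂ p = (WithLp.equiv 2 (Fin 4 → ℝ)).symm ![0, 0, 0, 1]) :
    ∀ p : EuclideanSpace ℝ (Fin 4), 0 < p 3 → p 3 < 1 →
      (lieBracket V₁ V₂ p = (WithLp.equiv 2 (Fin 4 → ℝ)).symm
          ![1 / (p 3) ^ 2, -(1 / (1 - p 3) ^ 2), 0, 0]) ∧
      LinearIndependent ℝ ![V₁ p, V₂ p, lieBracket V₁ V₂ p] := by
  intro p hq0 hq1
  have hq : p 3 ≠ 0 := ne_of_gt hq0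
  have hq1' : (1 : ℝ) - p 3 ≠ 0 := sub_ne_zero.mpr (ne_of_gt hq1)
  -- V₂ is constant
  have hV₂fun : V₂ = fun _ => (WithLp.equiv 2 (Fin 4 → ℝ)).symm ![0, 0, 0, 1] := funext hV₂
  have hDV₂ : fderiv ℝ V₂ p = 0 := by
    rw [hV₂fun]; exact fderiv_const_apply _
  -- V₁ as a composition
  set E : (Fin 4 → ℝ) ≃L[ℝ] EuclideanSpace ℝ (Fin 4) :=
    (PiLp.continuousLinearEquiv 2 ℝ (fun _ : Fin 4 => ℝ)).symm with hE
  have hEapp : ∀ v : Fin 4 → ℝ, E v = (WithLp.equiv 2 (Fin 4 → ℝ)).symm v := fun _ => rfl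
  set L : EuclideanSpace ℝ (Fin 4) →L[ℝ] ℝ := EuclideanSpace.proj (3 : Fin 4) with hL
  set g₀ : ℝ → (Fin 4 → ℝ) := fun q => ![1 / q, 1 / (1 - q), 1, 0] with hg₀
  have hV₁fun : V₁ = fun p => E (g₀ (L p)) := by
    funext x
    rw [hV₁ x]
    rfl
  -- derivative of g₀ at p 3
  set w₀ : Fin 4 → ℝ := ![-(1 / (p 3) ^ 2), 1 / (1 - p 3) ^ 2, 0, 0] with hw₀
  have hg₀' : HasDerivAt g₀ w₀ (p 3) := by
    rw [hasDerivAt_pi]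
    intro i
    fin_cases i
    · simpa [hg₀, hw₀, one_div] using hasDerivAt_inv hq
    · have h1 : HasDerivAt (fun q : ℝ => 1 - q) (-1) (p 3) :=
        (hasDerivAt_id _).const_sub 1
      have := h1.inv hq1'
      simpa [hg₀, hw₀, one_div, neg_div, Pi.inv_def] using this
    · simpa [hg₀, hw₀] using (hasDerivAt_const (p 3) (1 : ℝ))
    · simpa [hg₀, hw₀] using (hasDerivAt_const (p 3) (0 : ℝ))
  have hg' : HasFDerivAt (fun x => E (g₀ (L x)))
      ((E.toContinuousLinearMap.comp ((1 : ℝ →L[ℝ] ℝ).smulRight w₀)).comp L) p := by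
    exact (E.toContinuousLinearMap.hasFDerivAt.comp _
      hg₀'.hasFDerivAt).comp p L.hasFDerivAt
  have hDV₁ : fderiv ℝ V₁ p =
      (E.toContinuousLinearMap.comp ((1 : ℝ →L[ℝ] ℝ).smulRight w₀)).comp L := by
    rw [hV₁fun]; exact hg'.fderiv
  -- value of e₄'s third coordinate
  have hLe₄ : L (V₂ p) = 1 := by
    rw [hV₂ p]
    simp [hL, PiLp.proj_apply, WithLp.equiv_symm_apply, PiLp.toLp_apply]
  have hbracket : lieBracket V₁ V₂ p = (WithLp.equiv 2 (Fin 4 → ℝ)).symm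
      ![1 / (p 3) ^ 2, -(1 / (1 - p 3) ^ 2), 0, 0] := by
    unfold lieBracket
    rw [hDV₂, hDV₁]
    ext i
    fin_cases i <;>
      simp [hLe₄, hw₀, hEapp, WithLp.equiv_symm_apply, PiLp.toLp_apply]
  refine ⟨hbracket, ?_⟩
  rw [Fintype.linearIndependent_iff]
  intro g hg
  have hcoord : ∀ j : Fin 4,
      g 0 * (V₁ p) j + g 1 * (V₂ p) j + g 2 * (lieBracket V₁ V₂ p) j = 0 := by
    intro j
    have := congrArg (fun f : EuclideanSpace ℝ (Fin 4) => f j) hg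
    simpa [Fin.sum_univ_three, mul_comm] using this
  have h2 := hcoord 2
  have h3 := hcoord 3
  have h0 := hcoord 0
  rw [hV₁ p, hV₂ p, hbracket] at h0 h2 h3
  simp [WithLp.equiv_symm_apply, PiLp.toLp_apply] at h0 h2 h3
  -- h2 : g 0 = 0, h3 : g 1 = 0
  have hg0 : g 0 = 0 := by simpa using h2
  have hg1 : g 1 = 0 := by simpa using h3
  have hg2 : g 2 = 0 := by
    rw [hg0] at h0
    have hq2 : (p 3) ^ 2 ≠ 0 := pow_ne_zero _ hq
    field_simp at h0
    linarith
  intro i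
  fin_cases i <;> assumption
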